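/- Let P be an irreducible and aperiodic row-stochastic matrix on a countable set I that is reversible with respect to a stationary probability distribution π with π(i) > 0 for all i. Then, as an operator on ℓ²(π): (a) −1 is not an eigenvalue of P, i.e. no nonzero μ ∈ ℓ²(π) satisfies μP = −μ; and (b) every μ ∈ ℓ²(π) with μP = μ is a scalar multiple of π. -/

import Mathlib

noncomputable section

/-- Powers of a transition matrix on a countable set. -/
def Ppow {I : Type} [DecidableEq I] (P : I → I → ℝ) : ℕ → I → I → ℝ
  | 0 => fun i j => if i = j then 1 else 0
  | n + 1 => fun i j => ∑' k : I, Ppow P n i k * P k j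

lemma myAbsBound (z : ℂ) : ‖z‖ ≤ 1 + Complex.normSq z := by
  nlinarith [Complex.sq_norm z, norm_nonneg z, sq_nonneg (‖z‖ - 1)]

lemma Ppow_nonneg {I : Type} [DecidableEq I] (P : I → I → ℝ) (hPnn : ∀ i j, 0 ≤ P i j) :
    ∀ n i j, 0 ≤ Ppow P n i j
  | 0, i, j => by unfold Ppow; split <;> norm_num
  | n + 1, i, j =>
    tsum_nonneg fun k => mul_nonneg (Ppow_nonneg P hPnn n i k) (hPnn k j)

lemma exists_pos_of_tsum_pos {I : Type} {h : I → ℝ} (hnn : ∀ k, 0 ≤ h k)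
    (hpos : 0 < ∑' k, h k) : ∃ k, 0 < h k := by
  by_contra hc
  push_neg at hc
  have hz : ∀ k, h k = 0 := fun k => le_antisymm (hc k) (hnn k)
  simp only [hz, tsum_zero] at hpos
  exact lt_irrefl 0 hpos

lemma Ppow_path {I : Type} [DecidableEq I] (P : I → I → ℝ) (hPnn : ∀ i j, 0 ≤ P i j)
    (f : I → ℂ) (ε : ℂ) (hstep : ∀ i j, 0 < P i j → f j = ε * f i) :
    ∀ n i j, 0 < Ppow P n i j → f j = ε ^ n * f i := by
  intro n
  induction n with
  | zero =>
    intro i j h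
    unfold Ppow at h
    split at h
    · subst ‹i = j›; simp
    · exact absurd h (lt_irrefl 0)
  | succ n ih =>
    intro i j h
    unfold Ppow at h
    obtain ⟨k, hk⟩ := exists_pos_of_tsum_pos
      (fun k => mul_nonneg (Ppow_nonneg P hPnn n i k) (hPnn k j)) h
    have h1 : 0 < Ppow P n i k := by
      rcases (Ppow_nonneg P hPnn n i k).lt_or_eq with h' | h'
      · exact h'
      · exfalso; rw [← h'] at hk; simp at hk
    have h2 : 0 < P k j := by
      rcases (hPnn k j).lt_or_eq with h' | h'
      · exact h'
      · exfalso; rw [← h'] at hk; simp at hk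
    rw [hstep k j h2, ih i k h1, pow_succ]
    ring

open Complex in
lemma step_lemma {I : Type} [Countable I]
    (π : I → ℝ) (hπpos : ∀ i, 0 < π i)
    (P : I → I → ℝ) (hPnn : ∀ i j, 0 ≤ P i j) (hProw : ∀ i, HasSum (P i) 1)
    (hrev : ∀ i j, π i * P i j = π j * P j i)
    (μ : I → ℂ) (hμ : Summable (fun i : I => ‖μ i‖ ^ 2 / π i))
    (ε : ℝ) (hε : ε ^ 2 = 1)
    (heig : ∀ j : I, ∑' i : I, μ i * (P i j : ℂ) = (ε : ℂ) * μ j) :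
    ∀ i j, 0 < P i j → μ j / (π j : ℂ) = (ε : ℂ) * (μ i / (π i : ℂ)) := by
  set f : I → ℂ := fun i => μ i / (π i : ℂ) with hf
  have hπC : ∀ i, (π i : ℂ) ≠ 0 := fun i => by
    exact_mod_cast (hπpos i).ne'
  have hfμ : ∀ i, μ i = f i * (π i : ℂ) := fun i => by
    rw [hf]
    exact (div_mul_cancel₀ _ (hπC i)).symm
  set a : I → ℝ := fun i => π i * Complex.normSq (f i) with ha
  have ha_eq : ∀ i, a i = ‖μ i‖ ^ 2 / π i := by
    intro i
    have hπ0 : π i ≠ 0 := (hπpos i).ne'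
    simp only [ha, hf, Complex.normSq_div, Complex.normSq_ofReal, Complex.sq_norm]
    field_simp
  have hA : Summable a := hμ.congr fun i => (ha_eq i).symm
  have hann : ∀ i, 0 ≤ a i := fun i =>
    mul_nonneg (hπpos i).le (Complex.normSq_nonneg _)
  set F1 : I × I → ℝ := fun p => π p.1 * P p.1 p.2 * Complex.normSq (f p.1) with hF1def
  set F2 : I × I → ℝ := fun p => π p.1 * P p.1 p.2 * Complex.normSq (f p.2) with hF2def
  have hF1nn : ∀ p, 0 ≤ F1 p := fun p =>
    mul_nonneg (mul_nonneg (hπpos _).le (hPnn _ _)) (Complex.normSq_nonneg _)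
  have hF2nn : ∀ p, 0 ≤ F2 p := fun p =>
    mul_nonneg (mul_nonneg (hπpos _).le (hPnn _ _)) (Complex.normSq_nonneg _)
  have hF1row : ∀ i, Summable fun j => F1 (i, j) := by
    intro i
    exact ((hProw i).summable.mul_left (π i * Complex.normSq (f i))).congr fun j => by
      simp only [hF1def]; ring
  have hF1rowsum : ∀ i, ∑' j, F1 (i, j) = a i := by
    intro i
    have h : ∀ j, F1 (i, j) = (π i * Complex.normSq (f i)) * P i j := fun j => by
      simp only [hF1def]; ring
    rw [tsum_congr h, tsum_mul_left, (hProw i).tsum_eq, mul_one]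
  have hF1 : Summable F1 :=
    (summable_prod_of_nonneg hF1nn).2
      ⟨hF1row, hA.congr fun i => (hF1rowsum i).symm⟩
  have hF1sum : ∑' p, F1 p = ∑' i, a i := by
    rw [Summable.tsum_prod' hF1 hF1row]
    exact tsum_congr hF1rowsum
  have hF2swap : ∀ p : I × I, F2 p = F1 p.swap := by
    intro p
    simp only [hF1def, hF2def, Prod.fst_swap, Prod.snd_swap]
    rw [hrev]
  have hF2 : Summable F2 := hF1.prod_symm.congr fun p => (hF2swap p).symm
  have hF2sum : ∑' p, F2 p = ∑' i, a i := by
    rw [tsum_congr hF2swap, ← hF1sum]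
    exact ((Equiv.prodComm I I).tsum_eq F1)
  -- inner complex sums
  have hinnerS : ∀ i, Summable fun j => ((π i * P i j : ℝ) : ℂ) * f j := by
    intro i
    apply Summable.of_norm
    have hb : ∀ j, ‖((π i * P i j : ℝ) : ℂ) * f j‖ ≤ π i * P i j + F2 (i, j) := by
      intro j
      have h1 : ‖((π i * P i j : ℝ) : ℂ) * f j‖ = π i * P i j * ‖f j‖ := by
        rw [norm_mul, Complex.norm_real, Real.norm_eq_abs,
          _root_.abs_of_nonneg (mul_nonneg (hπpos i).le (hPnn i j))]
      rw [h1]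
      have h2 := mul_le_mul_of_nonneg_left (myAbsBound (f j))
        (mul_nonneg (hπpos i).le (hPnn i j))
      calc π i * P i j * ‖f j‖
          ≤ π i * P i j * (1 + Complex.normSq (f j)) := h2
        _ = π i * P i j + F2 (i, j) := by simp only [hF2def]; ring
    refine Summable.of_nonneg_of_le (fun j => norm_nonneg _) hb ?_
    exact ((hProw i).summable.mul_left (π i)).add (hF2.prod_factor i)
  have hinner : ∀ i, ∑' j, ((π i * P i j : ℝ) : ℂ) * f j = (ε : ℂ) * μ i := by
    intro i
    have hterm : ∀ j, ((π i * P i j : ℝ) : ℂ) * f j = μ j * (P j i : ℂ) := by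
      intro j
      rw [hrev i j]
      push_cast
      rw [hf]
      field_simp [hπC j]
    rw [tsum_congr hterm, heig i]
  -- the cross term
  set c : I × I → ℝ :=
    fun p => π p.1 * P p.1 p.2 * ((starRingEnd ℂ) (f p.1) * f p.2).re with hcdef
  have hcbound : ∀ p, |c p| ≤ (F1 p + F2 p) / 2 := by
    intro p
    have h1 : |((starRingEnd ℂ) (f p.1) * f p.2).re| ≤
        ‖f p.1‖ * ‖f p.2‖ := by
      refine (Complex.abs_re_le_norm _).trans ?_
      rw [norm_mul, Complex.norm_conj]
    have hπP : 0 ≤ π p.1 * P p.1 p.2 := mul_nonneg (hπpos _).le (hPnn _ _)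
    have h2 : |c p| = π p.1 * P p.1 p.2 * |((starRingEnd ℂ) (f p.1) * f p.2).re| := by
      rw [hcdef, abs_mul, _root_.abs_of_nonneg hπP]
    rw [h2]
    simp only [hF1def, hF2def]
    nlinarith [sq_nonneg (‖f p.1‖ - ‖f p.2‖),
      Complex.sq_norm (f p.1), Complex.sq_norm (f p.2),
      mul_le_mul_of_nonneg_left h1 hπP, abs_nonneg (((starRingEnd ℂ) (f p.1) * f p.2).re)]
  have hc : Summable c := by
    apply Summable.of_abs
    exact Summable.of_nonneg_of_le (fun p => abs_nonneg _) hcbound ((hF1.add hF2).div_const 2)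
  have hcrowsum : ∀ i, ∑' j, c (i, j) = ε * a i := by
    intro i
    have hterm : ∀ j, c (i, j) =
        ((starRingEnd ℂ) (f i) * (((π i * P i j : ℝ) : ℂ) * f j)).re := by
      intro j
      rw [hcdef]
      rw [show (starRingEnd ℂ) (f i) * (((π i * P i j : ℝ) : ℂ) * f j)
          = ((π i * P i j : ℝ) : ℂ) * ((starRingEnd ℂ) (f i) * f j) from by ring,
        Complex.re_ofReal_mul]
    rw [tsum_congr hterm,
      ← Complex.re_tsum ((hinnerS i).mul_left ((starRingEnd ℂ) (f i))),
      tsum_mul_left, hinner i]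
    have : (starRingEnd ℂ) (f i) * ((ε : ℂ) * μ i) = ((ε * a i : ℝ) : ℂ) := by
      rw [hfμ i, ha]
      push_cast
      rw [show (starRingEnd ℂ) (f i) * ((ε : ℂ) * (f i * (π i : ℂ)))
          = (ε : ℂ) * (π i : ℂ) * (f i * (starRingEnd ℂ) (f i)) from by ring,
        Complex.mul_conj]
      push_cast
      ring
    rw [this, Complex.ofReal_re]
  have hcsum : ∑' p, c p = ε * ∑' i, a i := by
    rw [Summable.tsum_prod' hc (fun i => hc.prod_factor i), tsum_congr hcrowsum, tsum_mul_left]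
  -- the Dirichlet form
  set g : I × I → ℝ :=
    fun p => π p.1 * P p.1 p.2 * Complex.normSq (f p.2 - (ε : ℂ) * f p.1) with hgdef
  have hg_eq : ∀ p, g p = (F2 p + F1 p) - (2 * ε) * c p := by
    intro p
    simp only [hgdef, hF1def, hF2def, hcdef]
    rw [Complex.normSq_sub, Complex.normSq_mul, Complex.normSq_ofReal,
      show ((starRingEnd ℂ) ((ε : ℂ) * f p.1)) = (ε : ℂ) * (starRingEnd ℂ) (f p.1) from by
        rw [map_mul, Complex.conj_ofReal],
      show f p.2 * ((ε : ℂ) * (starRingEnd ℂ) (f p.1))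
          = (ε : ℂ) * ((starRingEnd ℂ) (f p.1) * f p.2) from by ring,
      Complex.re_ofReal_mul]
    linear_combination (π p.1 * P p.1 p.2 * Complex.normSq (f p.1)) * hε
  have hg_nonneg : ∀ p, 0 ≤ g p := fun p =>
    mul_nonneg (mul_nonneg (hπpos _).le (hPnn _ _)) (Complex.normSq_nonneg _)
  have hcg : Summable fun p => (2 * ε) * c p := hc.mul_left _
  have hg : Summable g :=
    ((hF2.add hF1).sub hcg).congr fun p => (hg_eq p).symm
  have hgsum : ∑' p, g p = 0 := by
    rw [tsum_congr hg_eq, Summable.tsum_sub (hF2.add hF1) hcg, Summable.tsum_add hF2 hF1,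
      tsum_mul_left, hcsum, hF1sum, hF2sum]
    linear_combination (-2 * ∑' i, a i) * hε
  intro i j hPij
  have hzero : g (i, j) = 0 :=
    le_antisymm ((Summable.le_tsum hg (i, j) fun q _ => hg_nonneg q).trans_eq hgsum) (hg_nonneg _)
  have hns : Complex.normSq (f j - (ε : ℂ) * f i) = 0 := by
    by_contra hne
    have := mul_pos (mul_pos (hπpos i) hPij)
      ((Complex.normSq_nonneg _).lt_of_ne (Ne.symm hne))
    rw [show π i * P i j * Complex.normSq (f j - (ε : ℂ) * f i) = g (i, j) from rfl,
      hzero] at this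
    exact lt_irrefl 0 this
  have := Complex.normSq_eq_zero.mp hns
  have := sub_eq_zero.mp this
  simpa [hf] using this

theorem stmt11 (I : Type) [Countable I] [DecidableEq I]
    (π : I → ℝ) (hπpos : ∀ i, 0 < π i) (hπ : HasSum π 1)
    (P : I → I → ℝ) (hPnn : ∀ i j, 0 ≤ P i j) (hProw : ∀ i, HasSum (P i) 1)
    (hirr : ∀ i j : I, ∃ n : ℕ, 1 ≤ n ∧ 0 < Ppow P n i j)
    (haper : ∀ i : I, ∀ d : ℕ, (∀ n : ℕ, 1 ≤ n → 0 < Ppow P n i i → d ∣ n) → d = 1)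
    (hstat : ∀ j : I, HasSum (fun i : I => π i * P i j) (π j))
    (hrev : ∀ i j, π i * P i j = π j * P j i) :
    (∀ μ : I → ℂ, Summable (fun i : I => ‖μ i‖ ^ 2 / π i) →
      (∀ j : I, ∑' i : I, μ i * (P i j : ℂ) = -μ j) → ∀ i, μ i = 0) ∧
    (∀ μ : I → ℂ, Summable (fun i : I => ‖μ i‖ ^ 2 / π i) →
      (∀ j : I, ∑' i : I, μ i * (P i j : ℂ) = μ j) → ∃ c : ℂ, ∀ i, μ i = c * (π i : ℂ)) := by
  have hπC : ∀ i, (π i : ℂ) ≠ 0 := fun i => by exact_mod_cast (hπpos i).ne'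
  constructor
  · -- part (a)
    intro μ hμ heig i
    have heig' : ∀ j : I, ∑' i : I, μ i * (P i j : ℂ) = ((-1 : ℝ) : ℂ) * μ j := by
      intro j; rw [heig j]; push_cast; ring
    have hstep := step_lemma π hπpos P hPnn hProw hrev μ hμ (-1) (by norm_num) heig'
    set f : I → ℂ := fun i => μ i / (π i : ℂ) with hf
    have hstep' : ∀ i j, 0 < P i j → f j = (-1 : ℂ) * f i := by
      intro i j h
      have := hstep i j h
      rw [hf]
      push_cast at this ⊢
      exact this
    have hpath := Ppow_path P hPnn f (-1 : ℂ) hstep'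
    have hodd : ∃ n, 1 ≤ n ∧ 0 < Ppow P n i i ∧ Odd n := by
      by_contra hc
      push_neg at hc
      have h2 : ∀ n, 1 ≤ n → 0 < Ppow P n i i → 2 ∣ n := by
        intro n h1 hp
        exact (Nat.not_odd_iff_even.mp (hc n h1 hp)).two_dvd
      exact absurd (haper i 2 h2) (by norm_num)
    obtain ⟨n, hn1, hnpos, hnodd⟩ := hodd
    have hfi := hpath n i i hnpos
    rw [hnodd.neg_one_pow, neg_one_mul] at hfi
    have h2 : (2 : ℂ) * f i = 0 := by linear_combination hfi
    have hfi0 : f i = 0 := by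
      rcases mul_eq_zero.mp h2 with h | h
      · norm_num at h
      · exact h
    have : μ i / (π i : ℂ) = 0 := hfi0
    rcases div_eq_zero_iff.mp this with h | h
    · exact h
    · exact absurd h (hπC i)
  · -- part (b)
    intro μ hμ heig
    have heig' : ∀ j : I, ∑' i : I, μ i * (P i j : ℂ) = ((1 : ℝ) : ℂ) * μ j := by
      intro j; rw [heig j]; push_cast; ring
    have hstep := step_lemma π hπpos P hPnn hProw hrev μ hμ 1 (by norm_num) heig'
    set f : I → ℂ := fun i => μ i / (π i : ℂ) with hf
    have hstep' : ∀ i j, 0 < P i j → f j = (1 : ℂ) * f i := by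
      intro i j h
      have := hstep i j h
      rw [hf]
      push_cast at this ⊢
      exact this
    have hpath := Ppow_path P hPnn f (1 : ℂ) hstep'
    cases isEmpty_or_nonempty I with
    | inl hI => exact ⟨0, fun i => (hI.false i).elim⟩
    | inr hI =>
      obtain ⟨i₀⟩ := hI
      refine ⟨f i₀, fun i => ?_⟩
      obtain ⟨n, _, hn⟩ := hirr i₀ i
      have hfi := hpath n i₀ i hn
      rw [one_pow, one_mul] at hfi
      have : μ i = f i * (π i : ℂ) := by
        rw [hf]
        exact (div_mul_cancel₀ _ (hπC i)).symm
      rw [this, hfi]
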